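/- arXiv:2108.12107 — 2 statements merged into one kernel-verified Lean document; each statement's English description precedes it below -/
import Mathlib

section
/- Let d be a positive natural number, let 0 < m ≤ M be real numbers, and let c : Fin d → ℝ satisfy m ≤ c_j ≤ M for all j. Let x, y : ℝ → EuclideanSpace ℝ (Fin d) be twice-differentiable curves satisfying coordinatewise x''(t)_j = -2 c_j x(t)_j and y''(t)_j = -2 c_j y(t)_j for all t and j, with equal initial velocities x'(0) = y'(0). Then for T = (π/2)·(1/√(2M)), we have coordinatewise x(T)_j − y(T)_j = cos(√(2 c_j) T)·(x(0)_j − y(0)_j), and consequently ‖x(T) − y(T)‖ ≤ (1 − (π²/32)·(m/M))·‖x(0) − y(0)‖. -/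
set_option maxHeartbeats 800000


open Real

private lemma osc_sol (ω : ℝ) (hω : 0 < ω) (u w : ℝ → ℝ)
    (hu : ∀ t, HasDerivAt u (w t) t)
    (hw : ∀ t, HasDerivAt w (-(ω ^ 2) * u t) t)
    (hw0 : w 0 = 0) (t : ℝ) : u t = Real.cos (ω * t) * u 0 := by
  set A : ℝ → ℝ := fun s => u s * Real.cos (ω * s) - (w s / ω) * Real.sin (ω * s) with hA_def
  set B : ℝ → ℝ := fun s => u s * Real.sin (ω * s) + (w s / ω) * Real.cos (ω * s) with hB_def
  have hlin : ∀ s : ℝ, HasDerivAt (fun r => ω * r) ω s := fun s => by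
    simpa using (hasDerivAt_id s).const_mul ω
  have hcos : ∀ s : ℝ, HasDerivAt (fun r => Real.cos (ω * r)) (-Real.sin (ω * s) * ω) s :=
    fun s => (Real.hasDerivAt_cos (ω * s)).comp s (hlin s)
  have hsin : ∀ s : ℝ, HasDerivAt (fun r => Real.sin (ω * r)) (Real.cos (ω * s) * ω) s :=
    fun s => (Real.hasDerivAt_sin (ω * s)).comp s (hlin s)
  have hA : ∀ s : ℝ, HasDerivAt A 0 s := by
    intro s
    have h := (((hu s).mul (hcos s))).sub ((((hw s).div_const ω)).mul (hsin s))
    refine h.congr_deriv ?_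
    field_simp
    ring
  have hB : ∀ s : ℝ, HasDerivAt B 0 s := by
    intro s
    have h := (((hu s).mul (hsin s))).add ((((hw s).div_const ω)).mul (hcos s))
    refine h.congr_deriv ?_
    field_simp
    ring
  have hAc : A t = A 0 :=
    is_const_of_deriv_eq_zero (fun s => (hA s).differentiableAt) (fun s => (hA s).deriv) t 0
  have hBc : B t = B 0 :=
    is_const_of_deriv_eq_zero (fun s => (hB s).differentiableAt) (fun s => (hB s).deriv) t 0
  have hrep : u t = A t * Real.cos (ω * t) + B t * Real.sin (ω * t) := by
    simp only [hA_def, hB_def]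
    linear_combination (-(u t)) * Real.sin_sq_add_cos_sq (ω * t)
  have hA0 : A 0 = u 0 := by simp [hA_def]
  have hB0 : B 0 = 0 := by simp [hB_def, hw0]
  rw [hrep, hAc, hBc, hA0, hB0]
  ring

/-- Coupling contraction for the general harmonic oscillator: if `x` and `y`
satisfy `x''(t)_j = -2 c_j x(t)_j`, `y''(t)_j = -2 c_j y(t)_j` coordinatewise
with `m ≤ c_j ≤ M` and equal initial velocities, then at time
`T = (π/2)(1/√(2M))` each coordinate of the difference equals
`cos (√(2 c_j) T)` times its initial value, and the distance contracts by a
factor `1 - (π²/32)(m/M)`. -/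
theorem harmonic_oscillator_coupling_contraction (d : ℕ) (hd : 0 < d)
    (m M : ℝ) (hm : 0 < m) (hmM : m ≤ M)
    (c : Fin d → ℝ) (hc : ∀ j, m ≤ c j ∧ c j ≤ M)
    (x y x' y' : ℝ → EuclideanSpace ℝ (Fin d))
    (hx1 : ∀ t, HasDerivAt x (x' t) t)
    (hy1 : ∀ t, HasDerivAt y (y' t) t)
    (hx2 : ∀ t j, HasDerivAt (fun s => x' s j) (-2 * c j * x t j) t)
    (hy2 : ∀ t j, HasDerivAt (fun s => y' s j) (-2 * c j * y t j) t)
    (h0 : x' 0 = y' 0)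
    (T : ℝ) (hT : T = π / 2 * (1 / Real.sqrt (2 * M))) :
    (∀ j, x T j - y T j = Real.cos (Real.sqrt (2 * c j) * T) * (x 0 j - y 0 j)) ∧
    ‖x T - y T‖ ≤ (1 - π ^ 2 / 32 * (m / M)) * ‖x 0 - y 0‖ := by
  have hM : 0 < M := hm.trans_le hmM
  have hcpos : ∀ j, 0 < c j := fun j => hm.trans_le (hc j).1
  -- coordinate form of the first derivatives
  have hxj : ∀ t (j : Fin d), HasDerivAt (fun s => x s j) (x' t j) t := by
    intro t j
    exact ((EuclideanSpace.proj j).hasFDerivAt.comp_hasDerivAt t (hx1 t))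
  have hyj : ∀ t (j : Fin d), HasDerivAt (fun s => y s j) (y' t j) t := by
    intro t j
    exact ((EuclideanSpace.proj j).hasFDerivAt.comp_hasDerivAt t (hy1 t))
  have key : ∀ j, x T j - y T j = Real.cos (Real.sqrt (2 * c j) * T) * (x 0 j - y 0 j) := by
    intro j
    set ω : ℝ := Real.sqrt (2 * c j) with hωdef
    have h2c : (0:ℝ) < 2 * c j := by linarith [hcpos j]
    have hω : 0 < ω := Real.sqrt_pos.mpr h2c
    have hω2 : ω ^ 2 = 2 * c j := Real.sq_sqrt h2c.le
    have hu : ∀ t, HasDerivAt (fun s => x s j - y s j) (x' t j - y' t j) t :=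
      fun t => (hxj t j).sub (hyj t j)
    have hw : ∀ t, HasDerivAt (fun s => x' s j - y' s j)
        (-(ω ^ 2) * (x t j - y t j)) t := by
      intro t
      have h := (hx2 t j).sub (hy2 t j)
      refine h.congr_deriv ?_
      rw [hω2]; ring
    have hw0 : x' 0 j - y' 0 j = 0 := by rw [h0]; ring
    exact osc_sol ω hω _ _ hu hw hw0 T
  refine ⟨key, ?_⟩
  set K : ℝ := 1 - π ^ 2 / 32 * (m / M) with hKdef
  have hmM1 : m / M ≤ 1 := (div_le_one hM).mpr hmM
  have hmMpos : 0 < m / M := div_pos hm hM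
  have hπ : (0:ℝ) < π := Real.pi_pos
  have hπ4 : π ≤ 4 := by linarith [Real.pi_le_four]
  have hK0 : 0 ≤ K := by
    have : π ^ 2 ≤ 16 := by nlinarith
    have : π ^ 2 / 32 * (m / M) ≤ 16 / 32 * 1 := by
      apply mul_le_mul (by linarith) hmM1 hmMpos.le (by norm_num)
    simp only [hKdef]; linarith
  have hT0 : 0 ≤ T := by
    rw [hT]; positivity
  have hsqM : (0:ℝ) < Real.sqrt (2 * M) := Real.sqrt_pos.mpr (by linarith)
  -- coordinatewise bound on the cosine factor
  have hcosb : ∀ j, Real.cos (Real.sqrt (2 * c j) * T) ^ 2 ≤ K ^ 2 := by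
    intro j
    set s : ℝ := Real.sqrt (2 * c j) * T with hsdef
    have h2c : (0:ℝ) < 2 * c j := by linarith [hcpos j]
    have hs0 : 0 ≤ s := mul_nonneg (Real.sqrt_nonneg _) hT0
    have hsle : s ≤ π / 2 := by
      have hle : Real.sqrt (2 * c j) ≤ Real.sqrt (2 * M) :=
        Real.sqrt_le_sqrt (by linarith [(hc j).2])
      calc s = Real.sqrt (2 * c j) * (π / 2 * (1 / Real.sqrt (2 * M))) := by rw [hsdef, hT]
        _ ≤ Real.sqrt (2 * M) * (π / 2 * (1 / Real.sqrt (2 * M))) := by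
            apply mul_le_mul_of_nonneg_right hle; positivity
        _ = π / 2 := by field_simp
    have hs2 : π ^ 2 / 4 * (m / M) ≤ s ^ 2 := by
      have hsq : s ^ 2 = (2 * c j) * T ^ 2 := by
        rw [hsdef, mul_pow, Real.sq_sqrt h2c.le]
      have hT2 : T ^ 2 = π ^ 2 / 4 * (1 / (2 * M)) := by
        have h1 : Real.sqrt (2 * M) ^ 2 = 2 * M := Real.sq_sqrt (by positivity)
        rw [hT, mul_pow, div_pow, one_div, inv_pow, h1]
        norm_num
      rw [hsq, hT2]
      have h2m : 2 * m ≤ 2 * c j := by linarith [(hc j).1]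
      have : π ^ 2 / 4 * (m / M) = (2 * m) * (π ^ 2 / 4 * (1 / (2 * M))) := by
        field_simp
      rw [this]
      apply mul_le_mul_of_nonneg_right h2m (by positivity)
    have hcos0 : 0 ≤ Real.cos s :=
      Real.cos_nonneg_of_mem_Icc ⟨by linarith, hsle⟩
    have hcosub : Real.cos s ≤ 1 - 2 / π ^ 2 * s ^ 2 := by
      apply Real.cos_le_one_sub_mul_cos_sq
      rw [abs_of_nonneg hs0]; linarith
    have hub : Real.cos s ≤ K := by
      have h1 : 2 / π ^ 2 * (π ^ 2 / 4 * (m / M)) ≤ 2 / π ^ 2 * s ^ 2 := by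
        apply mul_le_mul_of_nonneg_left hs2 (by positivity)
      have h2 : 2 / π ^ 2 * (π ^ 2 / 4 * (m / M)) = m / M / 2 := by
        field_simp; ring
      have h3 : π ^ 2 / 32 * (m / M) ≤ m / M / 2 := by
        have : π ^ 2 ≤ 16 := by nlinarith
        nlinarith
      simp only [hKdef]
      linarith [hcosub, h1.trans_eq' h2]
    nlinarith
  -- norm estimate
  rw [EuclideanSpace.norm_eq, EuclideanSpace.norm_eq]
  have hKmul : K * Real.sqrt (∑ j, ‖(x 0 - y 0) j‖ ^ 2)
      = Real.sqrt (∑ j, K ^ 2 * ‖(x 0 - y 0) j‖ ^ 2) := by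
    rw [← Finset.mul_sum, Real.sqrt_mul (by positivity), Real.sqrt_sq hK0]
  rw [hKmul]
  apply Real.sqrt_le_sqrt
  apply Finset.sum_le_sum
  intro j _
  have hsub : ∀ (t : ℝ), (x t - y t) j = x t j - y t j := fun t => rfl
  rw [hsub, hsub, Real.norm_eq_abs, Real.norm_eq_abs, sq_abs, sq_abs, key j, mul_pow]
  exact mul_le_mul_of_nonneg_right (hcosb j) (sq_nonneg _)
end

section
/- Let d be a positive natural number and let f : EuclideanSpace ℝ (Fin d) → ℝ be measurable with 0 < ∫ e^{-f(x)} dx < ∞. Let H(x,v) = f(x) + ‖v‖²/2, and let φ : ℝ^d × ℝ^d → ℝ^d × ℝ^d be a measurable map that preserves the Lebesgue measure on ℝ^d × ℝ^d and satisfies H(φ(x,v)) = H(x,v) for all (x,v). Let π_x be the probability measure on ℝ^d with density proportional to e^{-f}, and let γ_d be the standard Gaussian measure N(0, I_d) on ℝ^d. Then the pushforward of the product measure π_x ⊗ γ_d under φ equals π_x ⊗ γ_d; in particular, the pushforward of π_x ⊗ γ_d under the composition of φ with the projection onto the first (position) coordinate equals π_x. -/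
open MeasureTheory Real
open scoped ENNReal

lemma integrable_gauss (d : ℕ) :
    Integrable (fun v : EuclideanSpace ℝ (Fin d) => Real.exp (-‖v‖ ^ 2 / 2)) := by
  have h := (GaussianFourier.integrable_cexp_neg_mul_sq_norm_add (V := EuclideanSpace ℝ (Fin d))
    (b := ((1:ℝ)/2 : ℂ)) (by norm_num) 0 0).norm
  refine h.congr (Filter.Eventually.of_forall fun v => ?_)
  simp [Complex.norm_exp, neg_div, neg_mul]
  rw [← Complex.ofReal_pow, Complex.ofReal_re]
  ring_nf

lemma gauss_int (d : ℕ) :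
    ∫ v : EuclideanSpace ℝ (Fin d), Real.exp (-‖v‖ ^ 2 / 2) = (2 * π) ^ ((d : ℝ) / 2) := by
  have h := GaussianFourier.integral_rexp_neg_mul_sq_norm (V := EuclideanSpace ℝ (Fin d))
    (b := (1/2 : ℝ)) (by norm_num)
  simp only [finrank_euclideanSpace_fin] at h
  have : ∀ v : EuclideanSpace ℝ (Fin d), -‖v‖ ^ 2 / 2 = -(1/2 : ℝ) * ‖v‖ ^ 2 := fun v => by ring
  simp_rw [this, h]
  norm_num
  congr 1
  ring

/-- Stationarity of the target density for idealized HMC: if `φ` preserves the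
Lebesgue measure on phase space and conserves `H (x, v) = f x + ‖v‖²/2`, then
`φ` leaves the Gibbs measure `π_x ⊗ N(0, I_d)` invariant; in particular the
position marginal of one HMC step started from `π_x ⊗ N(0, I_d)` is `π_x`. -/
theorem hmc_preserves_target (d : ℕ) (hd : 0 < d)
    (f : EuclideanSpace ℝ (Fin d) → ℝ) (hf : Measurable f)
    (Zf : ℝ≥0∞) (hZf : Zf = ∫⁻ x, ENNReal.ofReal (Real.exp (-f x)) ∂(volume))
    (hZf0 : 0 < Zf) (hZftop : Zf < ⊤)
    (H : EuclideanSpace ℝ (Fin d) × EuclideanSpace ℝ (Fin d) → ℝ)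
    (hH : ∀ x v, H (x, v) = f x + ‖v‖ ^ 2 / 2)
    (φ : EuclideanSpace ℝ (Fin d) × EuclideanSpace ℝ (Fin d) →
      EuclideanSpace ℝ (Fin d) × EuclideanSpace ℝ (Fin d))
    (hφ : MeasurePreserving φ volume volume)
    (hHφ : ∀ z, H (φ z) = H z)
    (πx : Measure (EuclideanSpace ℝ (Fin d)))
    (hπx : πx = (volume : Measure (EuclideanSpace ℝ (Fin d))).withDensity
      (fun x => ENNReal.ofReal (Real.exp (-f x)) / Zf))
    (γ : Measure (EuclideanSpace ℝ (Fin d)))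
    (hγ : γ = (volume : Measure (EuclideanSpace ℝ (Fin d))).withDensity
      (fun v => ENNReal.ofReal ((2 * π) ^ (-(d : ℝ) / 2) * Real.exp (-‖v‖ ^ 2 / 2)))) :
    (πx.prod γ).map φ = πx.prod γ ∧
    (πx.prod γ).map (fun z => (φ z).1) = πx := by
  -- densities
  set f₁ : EuclideanSpace ℝ (Fin d) → ℝ≥0∞ :=
    fun x => ENNReal.ofReal (Real.exp (-f x)) / Zf with hf₁
  set f₂ : EuclideanSpace ℝ (Fin d) → ℝ≥0∞ := fun v =>
    ENNReal.ofReal ((2 * π) ^ (-(d : ℝ) / 2) * Real.exp (-‖v‖ ^ 2 / 2)) with hf₂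
  have hf₁m : Measurable f₁ := (hf.neg.exp.ennreal_ofReal).div_const Zf
  have hf₂m : Measurable f₂ :=
    (measurable_const.mul (((measurable_norm.pow_const 2).neg.div_const 2).exp)).ennreal_ofReal
  -- H is measurable and determined
  have hHeq : H = fun z : EuclideanSpace ℝ (Fin d) × EuclideanSpace ℝ (Fin d) => f z.1 + ‖z.2‖ ^ 2 / 2 := funext fun z => hH z.1 z.2
  -- probability measures
  have hπuniv : πx Set.univ = 1 := by
    rw [hπx, withDensity_apply _ MeasurableSet.univ, Measure.restrict_univ]
    simp only [hf₁]
    simp_rw [div_eq_mul_inv]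
    rw [lintegral_mul_const (f := fun x => ENNReal.ofReal (Real.exp (-f x))) _ hf.neg.exp.ennreal_ofReal, ← hZf,
      ENNReal.mul_inv_cancel hZf0.ne' hZftop.ne]
  have hγuniv : γ Set.univ = 1 := by
    rw [hγ, withDensity_apply _ MeasurableSet.univ, Measure.restrict_univ]
    have hint : Integrable (fun v : EuclideanSpace ℝ (Fin d) => (2 * π) ^ (-(d : ℝ) / 2) * Real.exp (-‖v‖ ^ 2 / 2)) :=
      (integrable_gauss d).const_mul _
    rw [← ofReal_integral_eq_lintegral_ofReal hint
      (Filter.Eventually.of_forall fun v => by positivity)]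
    rw [integral_const_mul, gauss_int d, ← Real.rpow_add (by positivity),
      show (-(d : ℝ) / 2) + (d : ℝ) / 2 = 0 by ring, Real.rpow_zero, ENNReal.ofReal_one]
  haveI : IsProbabilityMeasure πx := ⟨hπuniv⟩
  haveI : IsProbabilityMeasure γ := ⟨hγuniv⟩
  -- combined density
  set C : ℝ≥0∞ := ENNReal.ofReal ((2 * π) ^ (-(d : ℝ) / 2)) / Zf with hC
  set g : EuclideanSpace ℝ (Fin d) × EuclideanSpace ℝ (Fin d) → ℝ≥0∞ := fun z => ENNReal.ofReal (Real.exp (-H z)) * C with hgdef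
  have hgm : Measurable g := by
    apply Measurable.mul_const
    apply ENNReal.measurable_ofReal.comp
    rw [hHeq]
    exact ((hf.comp measurable_fst).add
      (((measurable_norm.comp measurable_snd).pow_const 2).div_const 2)).neg.exp
  have hgfactor : ∀ z : EuclideanSpace ℝ (Fin d) × EuclideanSpace ℝ (Fin d), g z = f₁ z.1 * f₂ z.2 := by
    intro z
    simp only [hgdef, hf₁, hf₂, hC, hHeq]
    rw [show -(f z.1 + ‖z.2‖ ^ 2 / 2) = (-f z.1) + (-‖z.2‖ ^ 2 / 2) by ring, Real.exp_add,
      ENNReal.ofReal_mul (Real.exp_nonneg _),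
      ENNReal.ofReal_mul (by positivity : (0:ℝ) ≤ (2 * π) ^ (-(d : ℝ) / 2)),
      ENNReal.div_eq_inv_mul, ENNReal.div_eq_inv_mul]
    ring
  -- product representation
  have hprod : πx.prod γ = ((volume : Measure (EuclideanSpace ℝ (Fin d) × EuclideanSpace ℝ (Fin d)))).withDensity g := by
    rw [MeasureTheory.Measure.volume_eq_prod]
    refine Measure.prod_eq fun s t hs ht => ?_
    rw [withDensity_apply _ (hs.prod ht)]
    calc ∫⁻ z in s ×ˢ t, g z ∂(volume.prod volume)
        = ∫⁻ z, f₁ z.1 * f₂ z.2 ∂((volume.restrict s).prod (volume.restrict t)) := by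
          rw [Measure.prod_restrict]
          exact lintegral_congr fun z => hgfactor z
      _ = (∫⁻ x in s, f₁ x) * (∫⁻ v in t, f₂ v) := lintegral_prod_mul hf₁m.aemeasurable
            hf₂m.aemeasurable
      _ = πx s * γ t := by rw [hπx, hγ, withDensity_apply _ hs, withDensity_apply _ ht]
  -- invariance
  have hmap : (πx.prod γ).map φ = πx.prod γ := by
    rw [hprod]
    ext s hs
    rw [Measure.map_apply hφ.measurable hs, withDensity_apply _ (hφ.measurable hs),
      withDensity_apply _ hs]
    have : ∀ z, g z = g (φ z) := fun z => by simp only [hgdef, hHφ]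
    calc ∫⁻ z in φ ⁻¹' s, g z ∂volume
        = ∫⁻ z in φ ⁻¹' s, g (φ z) ∂volume := lintegral_congr fun z => this z
      _ = ∫⁻ y in s, g y ∂(Measure.map φ volume) := (setLIntegral_map hs hgm hφ.measurable).symm
      _ = ∫⁻ y in s, g y ∂volume := by rw [hφ.map_eq]
  refine ⟨hmap, ?_⟩
  have : (fun z : EuclideanSpace ℝ (Fin d) × EuclideanSpace ℝ (Fin d) => (φ z).1) = Prod.fst ∘ φ := rfl
  rw [this, ← Measure.map_map measurable_fst hφ.measurable, hmap, Measure.map_fst_prod,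
    hγuniv, one_smul]
end
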